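/- Under the same setting (payoff Π(σ,τ) = bτ - cσ, q reversible with stationary π, zero trace), with A and B as above, one has ∑_{x,y} π(x) q(x,y) (A(x,ξ)-B(y,ξ))² = b² (E_π[ξ(X_0)(1-ξ(X_4))] - E_π[ξ(X_0)(1-ξ(X_2))]) − 2bc (E_π[ξ(X_0)(1-ξ(X_3))] - E_π[ξ(X_0)(1-ξ(X_1))]) + c² E_π[ξ(X_0)(1-ξ(X_2))]. -/
import Mathlib

open Finset

/-- Iterates of the kernel applied to `ξ`. -/
private def hk {E : Type*} [Fintype E] [DecidableEq E] (q : Matrix E E ℝ) (ξ : E → ℝ)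
    (k : ℕ) (x : E) : ℝ :=
  ∑ y, (q ^ k) x y * ξ y

private lemma hk_one {E : Type*} [Fintype E] [DecidableEq E] (q : Matrix E E ℝ) (ξ : E → ℝ)
    (x : E) : hk q ξ 1 x = ∑ y, q x y * ξ y := by
  simp [hk]

private lemma hk_succ {E : Type*} [Fintype E] [DecidableEq E] (q : Matrix E E ℝ) (ξ : E → ℝ)
    (k : ℕ) (x : E) : ∑ y, q x y * hk q ξ k y = hk q ξ (k + 1) x := by
  unfold hk
  simp only [Finset.mul_sum]
  rw [Finset.sum_comm]
  refine Finset.sum_congr rfl fun z _ => ?_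
  rw [pow_succ', Matrix.mul_apply, Finset.sum_mul]
  exact Finset.sum_congr rfl fun y _ => by ring

private lemma rowpow {E : Type*} [Fintype E] [DecidableEq E] (q : Matrix E E ℝ)
    (hrow : ∀ x, ∑ y, q x y = 1) (k : ℕ) (x : E) : ∑ y, (q ^ k) x y = 1 := by
  induction k generalizing x with
  | zero => simp [Matrix.one_apply]
  | succ n ih =>
    simp only [pow_succ', Matrix.mul_apply]
    rw [Finset.sum_comm]
    calc ∑ z, ∑ y, q x z * (q ^ n) z y = ∑ z, q x z * ∑ y, (q ^ n) z y := by
          simp [Finset.mul_sum]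
      _ = ∑ z, q x z := by
          refine Finset.sum_congr rfl fun z _ => ?_
          rw [ih z, mul_one]
      _ = 1 := hrow x

theorem stmt8 {E : Type*} [Fintype E] [DecidableEq E]
    (q : Matrix E E ℝ) (π : E → ℝ) (b c : ℝ) (ξ : E → ℝ)
    (hqnn : ∀ x y, 0 ≤ q x y) (hq0 : ∀ x, q x x = 0)
    (hrow : ∀ x, ∑ y, q x y = 1)
    (hirr : ∀ x y, ∃ n, 0 < n ∧ 0 < (q ^ n) x y)
    (hrev : ∀ x y, π x * q x y = π y * q y x)
    (hπnn : ∀ x, 0 ≤ π x) (hπ1 : ∑ x, π x = 1)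
    (hξ : ∀ z, ξ z = 0 ∨ ξ z = 1) :
    ∑ x, ∑ y, π x * q x y *
        ((1 - ∑ z, ∑ z', q x z * q z z' * (b * ξ z' - c * ξ z)) -
          (1 - ∑ z, q y z * (b * ξ z - c * ξ y))) ^ 2
      = b ^ 2 * ((∑ x, ∑ y, π x * (q ^ 4) x y * ξ x * (1 - ξ y)) -
                  ∑ x, ∑ y, π x * (q ^ 2) x y * ξ x * (1 - ξ y))
        - 2 * b * c * ((∑ x, ∑ y, π x * (q ^ 3) x y * ξ x * (1 - ξ y)) -
                  ∑ x, ∑ y, π x * (q ^ 1) x y * ξ x * (1 - ξ y))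
        + c ^ 2 * ∑ x, ∑ y, π x * (q ^ 2) x y * ξ x * (1 - ξ y) := by
  classical
  -- stationarity
  have hstat : ∀ y, ∑ x, π x * q x y = π y := by
    intro y
    calc ∑ x, π x * q x y = ∑ x, π y * q y x :=
          Finset.sum_congr rfl fun x _ => hrev x y
      _ = π y * ∑ x, q y x := by rw [Finset.mul_sum]
      _ = π y := by rw [hrow y, mul_one]
  -- self-adjointness of the kernel w.r.t. π
  have adj : ∀ f g : E → ℝ, ∑ x, π x * (∑ y, q x y * f y) * g x
      = ∑ x, π x * f x * (∑ y, q x y * g y) := by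
    intro f g
    simp only [Finset.mul_sum, Finset.sum_mul]
    rw [Finset.sum_comm]
    refine Finset.sum_congr rfl fun y _ => Finset.sum_congr rfl fun x _ => ?_
    linear_combination f y * g x * hrev x y
  -- expectation terms
  have hE : ∀ k : ℕ, (∑ x, ∑ y, π x * (q ^ k) x y * ξ x * (1 - ξ y))
      = (∑ x, π x * ξ x) - ∑ x, π x * ξ x * hk q ξ k x := by
    intro k
    rw [← Finset.sum_sub_distrib]
    refine Finset.sum_congr rfl fun x _ => ?_
    have e1 : ∑ y, π x * (q ^ k) x y * ξ x * (1 - ξ y)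
        = π x * ξ x * ∑ y, (q ^ k) x y * (1 - ξ y) := by
      rw [Finset.mul_sum]; exact Finset.sum_congr rfl fun y _ => by ring
    have e2 : ∑ y, (q ^ k) x y * (1 - ξ y) = 1 - hk q ξ k x := by
      simp only [mul_sub, mul_one]
      rw [Finset.sum_sub_distrib, rowpow q hrow k x]
      rfl
    rw [e1, e2]; ring
  -- kernel applied to G gives F
  have hFG : ∀ x, ∑ y, q x y * (c * ξ y - b * hk q ξ 1 y)
      = c * hk q ξ 1 x - b * hk q ξ 2 x := by
    intro x
    have e : ∑ y, q x y * (c * ξ y - b * hk q ξ 1 y)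
        = c * (∑ y, q x y * ξ y) - b * (∑ y, q x y * hk q ξ 1 y) := by
      rw [Finset.mul_sum, Finset.mul_sum, ← Finset.sum_sub_distrib]
      exact Finset.sum_congr rfl fun y _ => by ring
    rw [e, hk_succ, ← hk_one q ξ x]
  have hA : ∀ x, (∑ z, ∑ z', q x z * q z z' * (b * ξ z' - c * ξ z))
      = b * hk q ξ 2 x - c * hk q ξ 1 x := by
    intro x
    have step : ∀ z, (∑ z', q x z * q z z' * (b * ξ z' - c * ξ z))
        = b * (q x z * hk q ξ 1 z) - c * (q x z * ξ z) := by
      intro z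
      have e : ∑ z', q x z * q z z' * (b * ξ z' - c * ξ z)
          = q x z * b * (∑ z', q z z' * ξ z') - q x z * c * ξ z * (∑ z', q z z') := by
        rw [Finset.mul_sum, Finset.mul_sum, ← Finset.sum_sub_distrib]
        exact Finset.sum_congr rfl fun z' _ => by ring
      rw [e, hrow z, ← hk_one q ξ z]
      ring
    calc (∑ z, ∑ z', q x z * q z z' * (b * ξ z' - c * ξ z))
        = ∑ z, (b * (q x z * hk q ξ 1 z) - c * (q x z * ξ z)) :=
          Finset.sum_congr rfl fun z _ => step z
      _ = b * (∑ z, q x z * hk q ξ 1 z) - c * (∑ z, q x z * ξ z) := by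
          rw [Finset.sum_sub_distrib, Finset.mul_sum, Finset.mul_sum]
      _ = b * hk q ξ 2 x - c * hk q ξ 1 x := by
          rw [hk_succ, ← hk_one q ξ x]
  have hB : ∀ y, (∑ z, q y z * (b * ξ z - c * ξ y)) = b * hk q ξ 1 y - c * ξ y := by
    intro y
    have e : ∑ z, q y z * (b * ξ z - c * ξ y)
        = b * (∑ z, q y z * ξ z) - c * ξ y * (∑ z, q y z) := by
      rw [Finset.mul_sum, Finset.mul_sum, ← Finset.sum_sub_distrib]
      exact Finset.sum_congr rfl fun z _ => by ring
    rw [e, hrow y, ← hk_one q ξ y]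
    ring
  -- the key reduction of the quadratic sum
  have key : ∀ F G : E → ℝ, (∀ x, ∑ y, q x y * G y = F x) →
      ∑ x, ∑ y, π x * q x y * (F x - G y) ^ 2
        = ∑ x, π x * G x * G x - ∑ x, π x * F x * F x := by
    intro F G hqG
    have e1 : ∀ x, (∑ y, π x * q x y * (F x - G y) ^ 2)
        = π x * F x * F x - 2 * (π x * F x * F x)
          + ∑ y, π x * q x y * (G y * G y) := by
      intro x
      have e : ∀ y, π x * q x y * (F x - G y) ^ 2
          = (π x * F x * F x * q x y - 2 * (π x * F x * (q x y * G y)))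
            + π x * q x y * (G y * G y) := fun y => by ring
      have s1 : ∑ y, π x * F x * F x * q x y = π x * F x * F x := by
        rw [← Finset.mul_sum, hrow, mul_one]
      have s2 : ∑ y, π x * F x * (q x y * G y) = π x * F x * F x := by
        rw [← Finset.mul_sum, hqG]
      rw [Finset.sum_congr rfl fun y _ => e y, Finset.sum_add_distrib,
        Finset.sum_sub_distrib, s1, ← Finset.mul_sum, s2]
    rw [Finset.sum_congr rfl fun x _ => e1 x, Finset.sum_add_distrib,
      Finset.sum_sub_distrib]
    have e2 : ∑ x, ∑ y, π x * q x y * (G y * G y) = ∑ x, π x * G x * G x := by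
      rw [Finset.sum_comm]
      refine Finset.sum_congr rfl fun y _ => ?_
      rw [← Finset.sum_mul, hstat]
      ring
    rw [e2, ← Finset.mul_sum]
    ring
  -- quadratic forms in terms of S_k
  have hS2 : ∑ x, π x * hk q ξ 1 x * hk q ξ 1 x = ∑ x, π x * ξ x * hk q ξ 2 x := by
    calc ∑ x, π x * hk q ξ 1 x * hk q ξ 1 x
        = ∑ x, π x * (∑ y, q x y * ξ y) * hk q ξ 1 x :=
          Finset.sum_congr rfl fun x _ => by rw [hk_one q ξ x]
      _ = ∑ x, π x * ξ x * (∑ y, q x y * hk q ξ 1 y) := adj ξ (hk q ξ 1)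
      _ = ∑ x, π x * ξ x * hk q ξ 2 x :=
          Finset.sum_congr rfl fun x _ => by rw [hk_succ]
  have hS3 : ∑ x, π x * hk q ξ 1 x * hk q ξ 2 x = ∑ x, π x * ξ x * hk q ξ 3 x := by
    calc ∑ x, π x * hk q ξ 1 x * hk q ξ 2 x
        = ∑ x, π x * (∑ y, q x y * ξ y) * hk q ξ 2 x :=
          Finset.sum_congr rfl fun x _ => by rw [hk_one q ξ x]
      _ = ∑ x, π x * ξ x * (∑ y, q x y * hk q ξ 2 y) := adj ξ (hk q ξ 2)
      _ = ∑ x, π x * ξ x * hk q ξ 3 x :=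
          Finset.sum_congr rfl fun x _ => by rw [hk_succ]
  have hS4 : ∑ x, π x * hk q ξ 2 x * hk q ξ 2 x = ∑ x, π x * ξ x * hk q ξ 4 x := by
    calc ∑ x, π x * hk q ξ 2 x * hk q ξ 2 x
        = ∑ x, π x * (∑ y, q x y * hk q ξ 1 y) * hk q ξ 2 x :=
          Finset.sum_congr rfl fun x _ => by rw [hk_succ]
      _ = ∑ x, π x * hk q ξ 1 x * (∑ y, q x y * hk q ξ 2 y) := adj (hk q ξ 1) (hk q ξ 2)
      _ = ∑ x, π x * hk q ξ 1 x * hk q ξ 3 x :=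
          Finset.sum_congr rfl fun x _ => by rw [hk_succ]
      _ = ∑ x, π x * (∑ y, q x y * ξ y) * hk q ξ 3 x :=
          Finset.sum_congr rfl fun x _ => by rw [hk_one q ξ x]
      _ = ∑ x, π x * ξ x * (∑ y, q x y * hk q ξ 3 y) := adj ξ (hk q ξ 3)
      _ = ∑ x, π x * ξ x * hk q ξ 4 x :=
          Finset.sum_congr rfl fun x _ => by rw [hk_succ]
  have hξξ : ∑ x, π x * ξ x * ξ x = ∑ x, π x * ξ x := by
    refine Finset.sum_congr rfl fun x _ => ?_
    rcases hξ x with h | h <;> rw [h] <;> ring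
  -- expand ∑ π G² and ∑ π F²
  have hGG : ∑ x, π x * (c * ξ x - b * hk q ξ 1 x) * (c * ξ x - b * hk q ξ 1 x)
      = c ^ 2 * (∑ x, π x * ξ x) - 2 * b * c * (∑ x, π x * ξ x * hk q ξ 1 x)
        + b ^ 2 * (∑ x, π x * ξ x * hk q ξ 2 x) := by
    have e : ∀ x, π x * (c * ξ x - b * hk q ξ 1 x) * (c * ξ x - b * hk q ξ 1 x)
        = c ^ 2 * (π x * ξ x * ξ x) - 2 * b * c * (π x * ξ x * hk q ξ 1 x)
          + b ^ 2 * (π x * hk q ξ 1 x * hk q ξ 1 x) := fun x => by ring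
    rw [Finset.sum_congr rfl fun x _ => e x, Finset.sum_add_distrib,
      Finset.sum_sub_distrib, ← Finset.mul_sum, ← Finset.mul_sum, ← Finset.mul_sum,
      hξξ, hS2]
  have hFF : ∑ x, π x * (c * hk q ξ 1 x - b * hk q ξ 2 x)
        * (c * hk q ξ 1 x - b * hk q ξ 2 x)
      = c ^ 2 * (∑ x, π x * ξ x * hk q ξ 2 x) - 2 * b * c * (∑ x, π x * ξ x * hk q ξ 3 x)
        + b ^ 2 * (∑ x, π x * ξ x * hk q ξ 4 x) := by
    have e : ∀ x, π x * (c * hk q ξ 1 x - b * hk q ξ 2 x)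
          * (c * hk q ξ 1 x - b * hk q ξ 2 x)
        = c ^ 2 * (π x * hk q ξ 1 x * hk q ξ 1 x)
          - 2 * b * c * (π x * hk q ξ 1 x * hk q ξ 2 x)
          + b ^ 2 * (π x * hk q ξ 2 x * hk q ξ 2 x) := fun x => by ring
    rw [Finset.sum_congr rfl fun x _ => e x, Finset.sum_add_distrib,
      Finset.sum_sub_distrib, ← Finset.mul_sum, ← Finset.mul_sum, ← Finset.mul_sum,
      hS2, hS3, hS4]
  -- assemble
  calc ∑ x, ∑ y, π x * q x y *
        ((1 - ∑ z, ∑ z', q x z * q z z' * (b * ξ z' - c * ξ z)) -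
          (1 - ∑ z, q y z * (b * ξ z - c * ξ y))) ^ 2
      = ∑ x, ∑ y, π x * q x y *
          ((c * hk q ξ 1 x - b * hk q ξ 2 x) - (c * ξ y - b * hk q ξ 1 y)) ^ 2 := by
        refine Finset.sum_congr rfl fun x _ => Finset.sum_congr rfl fun y _ => ?_
        rw [hA, hB]
        ring
    _ = ∑ x, π x * (c * ξ x - b * hk q ξ 1 x) * (c * ξ x - b * hk q ξ 1 x)
        - ∑ x, π x * (c * hk q ξ 1 x - b * hk q ξ 2 x)
            * (c * hk q ξ 1 x - b * hk q ξ 2 x) :=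
        key (fun x => c * hk q ξ 1 x - b * hk q ξ 2 x)
          (fun y => c * ξ y - b * hk q ξ 1 y) hFG
    _ = _ := by
        rw [hGG, hFF, hE 1, hE 2, hE 3, hE 4]
        ring
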